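/- Kemeny's constant of a connected graph G with m edges satisfies κ(G) = (d_G^T R_G d_G)/(4m), where d_G is the degree vector and R_G is the effective resistance matrix. -/

import Mathlib

open SimpleGraph Finset Matrix
open scoped Classical

noncomputable section

/-- Number of spanning trees of `G`. -/
noncomputable def tau {V : Type*} [Fintype V] (G : SimpleGraph V) : ℕ :=
  Set.ncard {H : SimpleGraph V | H ≤ G ∧ H.Connected ∧ H.IsAcyclic}

/-- Number of 2-tree spanning forests of `G` separating `i` and `j`. -/
noncomputable def twoForest {V : Type*} [Fintype V] (G : SimpleGraph V) (i j : V) : ℕ :=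
  Set.ncard {H : SimpleGraph V | H ≤ G ∧ H.IsAcyclic ∧ ¬ H.Reachable i j ∧
    ∀ v, H.Reachable i v ∨ H.Reachable j v}

/-- The four Penrose equations: `B` is the Moore–Penrose inverse of `A`. -/
def IsMoorePenroseInv {n : Type*} [Fintype n] (A B : Matrix n n ℝ) : Prop :=
  A * B * A = A ∧ B * A * B = B ∧ (A * B)ᵀ = A * B ∧ (B * A)ᵀ = B * A

/-- Laplacian matrix of a graph. -/
noncomputable def lap {V : Type*} [Fintype V] [DecidableEq V] (G : SimpleGraph V) :
    Matrix V V ℝ :=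
  fun i j => if i = j then (G.degree i : ℝ) else if G.Adj i j then -1 else 0

/-- Effective resistance computed from a (Moore–Penrose inverse) matrix `Ld`. -/
noncomputable def effRes {V : Type*} [Fintype V] [DecidableEq V] (Ld : Matrix V V ℝ)
    (i j : V) : ℝ :=
  (Pi.single i 1 - Pi.single j 1) ⬝ᵥ Ld.mulVec (Pi.single i 1 - Pi.single j 1)

/-- Transition matrix of the simple random walk on `G`. -/
noncomputable def transP {V : Type*} [Fintype V] (G : SimpleGraph V) : Matrix V V ℝ :=
  fun i j => if G.Adj i j then (1 : ℝ) / (G.degree i) else 0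

/-- Stationary distribution of the simple random walk. -/
noncomputable def statPi {V : Type*} [Fintype V] (G : SimpleGraph V) (i : V) : ℝ :=
  (G.degree i : ℝ) / (2 * G.edgeFinset.card)

/-- `M` is the matrix of mean first passage times of the random walk on `G`. -/
def IsMFPT {V : Type*} [Fintype V] (G : SimpleGraph V) (M : V → V → ℝ) : Prop :=
  (∀ j, M j j = 0) ∧ ∀ i j, i ≠ j → M i j = 1 + ∑ k, transP G i k * M k j

/-- Kemeny's constant. -/
noncomputable def kemeny {V : Type*} [Fintype V] (G : SimpleGraph V) (M : V → V → ℝ) : ℝ :=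
  ∑ i, ∑ j ∈ Finset.univ.filter (· ≠ i), statPi G i * M i j * statPi G j

/-- Accessibility index of vertex `v`. -/
noncomputable def acc {V : Type*} [Fintype V] (G : SimpleGraph V) (M : V → V → ℝ) (v : V) : ℝ :=
  ∑ i ∈ Finset.univ.filter (· ≠ v), statPi G i * M i v

/-- Joining `G1` and `G2` by the bridge `v1 ∼ v2`. -/
def chainTwo {V1 V2 : Type*} (G1 : SimpleGraph V1) (G2 : SimpleGraph V2)
    (v1 : V1) (v2 : V2) : SimpleGraph (V1 ⊕ V2) where
  Adj p q :=
    match p, q with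
    | Sum.inl a, Sum.inl b => G1.Adj a b
    | Sum.inr a, Sum.inr b => G2.Adj a b
    | Sum.inl a, Sum.inr b => a = v1 ∧ b = v2
    | Sum.inr a, Sum.inl b => b = v1 ∧ a = v2
  symm := by
    constructor
    rintro (a | a) (b | b) h
    · exact G1.symm.symm _ _ h
    · exact ⟨h.1, h.2⟩
    · exact ⟨h.1, h.2⟩
    · exact G2.symm.symm _ _ h
  loopless := by
    constructor
    rintro (a | a) h
    · exact G1.loopless.irrefl a h
    · exact G2.loopless.irrefl a h

end

section Helpers
set_option linter.unusedSectionVars false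

variable {V : Type*} [Fintype V] [DecidableEq V] (G : SimpleGraph V)

lemma lap_eq' (i k : V) :
    lap G i k = (if i = k then (G.degree i : ℝ) else 0) - (if G.Adj i k then 1 else 0) := by
  unfold lap
  by_cases h : i = k
  · subst h; simp [G.loopless.irrefl i]
  · simp [h]; split <;> ring

lemma lap_symm (i k : V) : lap G i k = lap G k i := by
  unfold lap
  by_cases h : i = k
  · subst h; rfl
  · simp [h, Ne.symm h, G.adj_comm i k]

lemma sum_adj_ite (i : V) (f : V → ℝ) :
    ∑ k, (if G.Adj i k then f k else 0) = ∑ k ∈ G.neighborFinset i, f k := by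
  rw [neighborFinset_eq_filter, Finset.sum_filter]

lemma sum_adj_const (i : V) (c : ℝ) :
    ∑ k, (if G.Adj i k then c else 0) = (G.degree i : ℝ) * c := by
  rw [sum_adj_ite G i (fun _ => c), Finset.sum_const, ← G.card_neighborFinset_eq_degree i]
  simp [nsmul_eq_mul]

lemma lap_row_sum (i : V) : ∑ k, lap G i k = 0 := by
  simp only [lap_eq', Finset.sum_sub_distrib]
  rw [Finset.sum_ite_eq univ i (fun _ => (G.degree i : ℝ)), sum_adj_const G i 1]
  simp

lemma lap_mulVec (k : V → ℝ) (i : V) :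
    (lap G).mulVec k i = ∑ l, (if G.Adj i l then k i - k l else 0) := by
  have h2 : ∑ l, (if G.Adj i l then k i - k l else 0)
      = ∑ l, (if G.Adj i l then k i else 0) - ∑ l, (if G.Adj i l then k l else 0) := by
    rw [← Finset.sum_sub_distrib]; congr 1; ext l; split <;> ring
  simp only [Matrix.mulVec, dotProduct, lap_eq', sub_mul, ite_mul, zero_mul, one_mul,
    Finset.sum_sub_distrib]
  rw [Finset.sum_ite_eq univ i, h2, sum_adj_const G i (k i)]; simp

lemma lap_mulVec' (k : V → ℝ) (i : V) :
    (lap G).mulVec k i = (G.degree i : ℝ) * k i - ∑ l, (if G.Adj i l then k l else 0) := by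
  rw [lap_mulVec]
  have h2 : ∑ l, (if G.Adj i l then k i - k l else 0)
      = ∑ l, (if G.Adj i l then k i else 0) - ∑ l, (if G.Adj i l then k l else 0) := by
    rw [← Finset.sum_sub_distrib]; congr 1; ext l; split <;> ring
  rw [h2, sum_adj_const G i (k i)]

lemma lap_ker_const (hG : G.Connected) (k : V → ℝ) (hk : (lap G).mulVec k = 0) :
    ∀ i j, k i = k j := by
  have hrow : ∀ i, ∑ l, (if G.Adj i l then k i - k l else 0) = 0 := by
    intro i; rw [← lap_mulVec]; rw [hk]; rfl
  have hrow' : ∀ l, ∑ i, (if G.Adj i l then k i - k l else 0) = 0 := by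
    intro l
    have heq : ∑ i, (if G.Adj i l then k i - k l else 0)
        = -∑ i, (if G.Adj l i then k l - k i else 0) := by
      rw [← Finset.sum_neg_distrib]; congr 1; ext i
      by_cases h : G.Adj i l
      · simp only [h, h.symm, if_true]; ring
      · have h' : ¬ G.Adj l i := fun hh => h hh.symm
        simp [h, h']
    rw [heq, hrow l, neg_zero]
  have total : (∑ i, ∑ l, (if G.Adj i l then (k i - k l)^2 else 0)) = 0 := by
    have expand : ∀ i l : V, (if G.Adj i l then (k i - k l)^2 else 0)
        = (if G.Adj i l then k i - k l else 0) * k i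
          - (if G.Adj i l then k i - k l else 0) * k l := by
      intro i l; split <;> ring
    simp only [expand, Finset.sum_sub_distrib]
    have h1 : (∑ i, ∑ l, (if G.Adj i l then k i - k l else 0) * k i) = 0 := by
      apply Finset.sum_eq_zero; intro i _
      rw [← Finset.sum_mul, hrow i, zero_mul]
    have h3 : (∑ i, ∑ l, (if G.Adj i l then k i - k l else 0) * k l) = 0 := by
      rw [Finset.sum_comm]
      apply Finset.sum_eq_zero; intro l _
      rw [← Finset.sum_mul, hrow' l, zero_mul]
    rw [h1, h3, sub_zero]
  have hadj : ∀ i l, G.Adj i l → k i = k l := by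
    intro i l hil
    have hnn : ∀ a ∈ (univ : Finset V), (0:ℝ) ≤ ∑ b, (if G.Adj a b then (k a - k b)^2 else 0) := by
      intro a _; apply Finset.sum_nonneg; intro b _; split
      · positivity
      · exact le_refl 0
    have h0 := (Finset.sum_eq_zero_iff_of_nonneg hnn).mp total i (Finset.mem_univ i)
    have hnn2 : ∀ b ∈ (univ : Finset V), (0:ℝ) ≤ (if G.Adj i b then (k i - k b)^2 else 0) := by
      intro b _; split
      · positivity
      · exact le_refl 0
    have h00 := (Finset.sum_eq_zero_iff_of_nonneg hnn2).mp h0 l (Finset.mem_univ l)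
    rw [if_pos hil] at h00
    have hz : k i - k l = 0 := by nlinarith [sq_nonneg (k i - k l)]
    linarith
  intro i j
  obtain ⟨w⟩ := hG.preconnected i j
  induction w with
  | nil => rfl
  | cons h p ih => exact (hadj _ _ h).trans ih

lemma degree_pos' (hG : G.Connected) (hcard : 1 < Fintype.card V) (v : V) :
    0 < G.degree v := by
  rw [G.degree_pos_iff_exists_adj]
  obtain ⟨w, hw⟩ := Fintype.exists_ne_of_one_lt_card hcard v
  obtain ⟨p⟩ := hG.preconnected v w
  cases p with
  | nil => exact absurd rfl hw
  | cons h q => exact ⟨_, h⟩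

lemma effRes_eq (Ld : Matrix V V ℝ) (i j : V) :
    effRes Ld i j = Ld i i - Ld i j - Ld j i + Ld j j := by
  by_cases h : i = j
  · subst h; simp [effRes]
  · simp only [effRes, Matrix.mulVec, dotProduct, Pi.sub_apply, Pi.single_apply]
    have expand : ∀ a b : V,
        Ld a b * ((if b = i then (1:ℝ) else 0) - (if b = j then 1 else 0))
        = (if b = i then Ld a b else 0) - (if b = j then Ld a b else 0) := by
      intro a b; by_cases h1 : b = i <;> by_cases h2 : b = j <;> simp [h1, h2, h, Ne.symm h]
    simp only [expand, Finset.sum_sub_distrib, Finset.sum_ite_eq' univ, Finset.mem_univ, if_true]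
    have expand2 : ∀ a : V,
        ((if a = i then (1:ℝ) else 0) - (if a = j then 1 else 0)) * (Ld a i - Ld a j)
        = (if a = i then Ld a i - Ld a j else 0) - (if a = j then Ld a i - Ld a j else 0) := by
      intro a; by_cases h1 : a = i <;> by_cases h2 : a = j <;> simp [h1, h2, h, Ne.symm h]
    simp only [expand2, Finset.sum_sub_distrib, Finset.sum_ite_eq' univ, Finset.mem_univ, if_true]
    ring

lemma effRes_self (Ld : Matrix V V ℝ) (i : V) : effRes Ld i i = 0 := by
  simp [effRes]

lemma mfpt_eq (hG : G.Connected) (hcard : 1 < Fintype.card V)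
    (M : V → V → ℝ) (hM : IsMFPT G M)
    (Ld : Matrix V V ℝ) (hLd : IsMoorePenroseInv (lap G) Ld) (i j : V) :
    M i j = Ld.mulVec (fun v => (G.degree v : ℝ)) i - Ld.mulVec (fun v => (G.degree v : ℝ)) j
      + (2 * (G.edgeFinset.card : ℝ)) * (Ld j j - Ld i j) := by
  set d : V → ℝ := fun v => (G.degree v : ℝ) with hd
  set m2 : ℝ := 2 * (G.edgeFinset.card : ℝ) with hm2def
  set f : V → ℝ := fun v => M v j with hfdef
  have hdsum : ∑ v, d v = m2 := by
    have h1 := G.sum_degrees_eq_twice_card_edges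
    rw [hd, hm2def]
    calc ∑ v, ((G.degree v : ℝ)) = ((∑ v, G.degree v : ℕ) : ℝ) := by push_cast; rfl
      _ = ((2 * G.edgeFinset.card : ℕ) : ℝ) := by rw [h1]
      _ = 2 * (G.edgeFinset.card : ℝ) := by push_cast; ring
  have hF : ∀ a, a ≠ j → (lap G).mulVec f a = d a := by
    intro a ha
    rw [lap_mulVec']
    have hrec := hM.2 a j ha
    have hda : (0:ℝ) < (G.degree a : ℝ) := by exact_mod_cast degree_pos' G hG hcard a
    have htp : ∑ k, transP G a k * M k j = (∑ k, if G.Adj a k then M k j else 0) / (G.degree a : ℝ) := by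
      rw [Finset.sum_div]
      apply Finset.sum_congr rfl; intro k _
      unfold transP; split
      · ring
      · simp
    rw [htp] at hrec
    have hkey : ∑ k, (if G.Adj a k then M k j else 0) = (G.degree a : ℝ) * (M a j - 1) := by
      field_simp at hrec; linarith
    show (G.degree a : ℝ) * f a - (∑ l, if G.Adj a l then f l else 0) = d a
    have : (∑ l, if G.Adj a l then f l else 0) = ∑ k, (if G.Adj a k then M k j else 0) := rfl
    rw [this, hkey]
    show (G.degree a : ℝ) * M a j - _ = (G.degree a : ℝ)
    ring
  have hsum0 : ∑ a, (lap G).mulVec f a = 0 := by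
    simp only [Matrix.mulVec, dotProduct]
    rw [Finset.sum_comm]
    apply Finset.sum_eq_zero; intro l _
    rw [← Finset.sum_mul]
    have hz : ∑ a, lap G a l = 0 := by
      rw [Finset.sum_congr rfl (fun a _ => lap_symm G a l)]
      exact lap_row_sum G l
    rw [hz, zero_mul]
  have hFj : (lap G).mulVec f j = d j - m2 := by
    have hsplit := Finset.add_sum_erase univ ((lap G).mulVec f) (Finset.mem_univ j)
    have he : ∑ a ∈ univ.erase j, (lap G).mulVec f a = ∑ a ∈ univ.erase j, d a := by
      apply Finset.sum_congr rfl; intro a ha; exact hF a (Finset.ne_of_mem_erase ha)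
    have hdd := Finset.add_sum_erase univ d (Finset.mem_univ j)
    rw [hdsum] at hdd
    rw [he] at hsplit
    rw [hsum0] at hsplit
    linarith
  have hLf : ∀ a, (lap G).mulVec f a = d a - (if a = j then m2 else 0) := by
    intro a; by_cases ha : a = j
    · subst ha; rw [hFj]; simp
    · rw [hF a ha]; simp [ha]
  have hg : (lap G).mulVec (Ld.mulVec ((lap G).mulVec f)) = (lap G).mulVec f := by
    rw [Matrix.mulVec_mulVec, Matrix.mulVec_mulVec, hLd.1]
  set g : V → ℝ := Ld.mulVec ((lap G).mulVec f) with hgdef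
  have hker : (lap G).mulVec (f - g) = 0 := by
    rw [Matrix.mulVec_sub, hg, sub_self]
  have hconst := lap_ker_const G hG _ hker i j
  have hfj : f j = 0 := hM.1 j
  have hgval : ∀ a, g a = Ld.mulVec d a - m2 * Ld a j := by
    intro a
    have hterm : ∀ l, Ld a l * ((lap G).mulVec f) l
        = Ld a l * d l - (if l = j then Ld a l * m2 else 0) := by
      intro l; rw [hLf l]; split <;> ring
    calc g a = ∑ l, Ld a l * ((lap G).mulVec f) l := rfl
      _ = ∑ l, (Ld a l * d l - (if l = j then Ld a l * m2 else 0)) :=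
          Finset.sum_congr rfl (fun l _ => hterm l)
      _ = Ld.mulVec d a - m2 * Ld a j := by
          rw [Finset.sum_sub_distrib, Finset.sum_ite_eq' univ j]
          simp [Matrix.mulVec, dotProduct]; ring
  have hPi : f i - g i = f j - g j := hconst
  have hMij : M i j = g i - g j := by
    have h1 : f i = M i j := rfl
    rw [hfj] at hPi; linarith [hPi]
  rw [hMij, hgval i, hgval j]
  ring

end Helpers

/-- `κ(G) = (d_Gᵀ R_G d_G)/(4m)`. -/
theorem kemeny_eq_dRd {V : Type*} [Fintype V] [DecidableEq V]
    (G : SimpleGraph V) (hG : G.Connected) (M : V → V → ℝ) (hM : IsMFPT G M)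
    (Ld : Matrix V V ℝ) (hLd : IsMoorePenroseInv (lap G) Ld) :
    kemeny G M =
      (∑ i, ∑ j, (G.degree i : ℝ) * effRes Ld i j * (G.degree j : ℝ)) /
        (4 * (G.edgeFinset.card : ℝ)) := by
  by_cases hcard : 1 < Fintype.card V
  · set d : V → ℝ := fun v => (G.degree v : ℝ) with hd
    set m2 : ℝ := 2 * (G.edgeFinset.card : ℝ) with hm2
    set S : ℝ := ∑ i, ∑ j, d i * effRes Ld i j * d j with hS
    have hm2pos : 0 < m2 := by
      have hv : Nonempty V := Fintype.card_pos_iff.mp (by omega)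
      obtain ⟨v⟩ := hv
      have hdp := degree_pos' G hG hcard v
      obtain ⟨w, hw⟩ := (G.degree_pos_iff_exists_adj v).mp hdp
      have hmem : s(v, w) ∈ G.edgeFinset := by
        rw [SimpleGraph.mem_edgeFinset]; exact hw
      have hc : 0 < G.edgeFinset.card := Finset.card_pos.mpr ⟨_, hmem⟩
      have hc' : (0:ℝ) < (G.edgeFinset.card : ℝ) := by exact_mod_cast hc
      rw [hm2]; linarith
    have hcomm : ∀ i j, M i j + M j i = m2 * effRes Ld i j := by
      intro i j
      rw [mfpt_eq G hG hcard M hM Ld hLd i j, mfpt_eq G hG hcard M hM Ld hLd j i,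
        effRes_eq]
      rw [hm2]; ring
    have hstat : ∀ v, statPi G v = d v / m2 := by
      intro v; rfl
    set T : ℝ := ∑ i, ∑ j, (if j ≠ i then d i * M i j * d j else 0) with hT
    have step1 : kemeny G M = T / (m2 * m2) := by
      unfold kemeny
      rw [hT, Finset.sum_div]
      apply Finset.sum_congr rfl; intro i _
      rw [Finset.sum_filter, Finset.sum_div]
      apply Finset.sum_congr rfl; intro j _
      rw [hstat i, hstat j]
      split
      · ring
      · simp
    have hswapT : T = ∑ i, ∑ j, (if j ≠ i then d j * M j i * d i else 0) := by
      rw [hT, Finset.sum_comm]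
      apply Finset.sum_congr rfl; intro a _
      apply Finset.sum_congr rfl; intro b _
      exact if_congr ne_comm rfl rfl
    have hTT : 2 * T = m2 * S := by
      rw [two_mul]
      nth_rewrite 2 [hswapT]
      rw [hT, ← Finset.sum_add_distrib]
      have hcongr : ∀ i ∈ (univ : Finset V),
          ((∑ j, (if j ≠ i then d i * M i j * d j else 0))
            + ∑ j, (if j ≠ i then d j * M j i * d i else 0))
          = ∑ j, m2 * (d i * effRes Ld i j * d j) := by
        intro i _
        rw [← Finset.sum_add_distrib]
        apply Finset.sum_congr rfl; intro j _
        by_cases h : j ≠ i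
        · rw [if_pos h, if_pos h]
          calc d i * M i j * d j + d j * M j i * d i
              = d i * d j * (M i j + M j i) := by ring
            _ = d i * d j * (m2 * effRes Ld i j) := by rw [hcomm i j]
            _ = m2 * (d i * effRes Ld i j * d j) := by ring
        · push_neg at h; subst h
          rw [effRes_self]
          simp
      rw [Finset.sum_congr rfl hcongr, hS]
      simp only [← Finset.mul_sum]
    have h4 : 4 * (G.edgeFinset.card : ℝ) = 2 * m2 := by rw [hm2]; ring
    rw [step1, h4]
    rw [div_eq_div_iff (by nlinarith) (by nlinarith)]
    linear_combination m2 * hTT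
  · have hsub : ∀ a b : V, a = b := by
      intro a b
      have hle : Fintype.card V ≤ 1 := by omega
      exact Fintype.card_le_one_iff.mp hle a b
    have hL : kemeny G M = 0 := by
      unfold kemeny
      apply Finset.sum_eq_zero; intro i _
      apply Finset.sum_eq_zero; intro j hj
      simp only [Finset.mem_filter, Finset.mem_univ, true_and] at hj
      exact absurd (hsub j i) hj
    have hR : (∑ i, ∑ j, (G.degree i : ℝ) * effRes Ld i j * (G.degree j : ℝ)) = 0 := by
      apply Finset.sum_eq_zero; intro i _
      apply Finset.sum_eq_zero; intro j _
      rw [hsub i j, effRes_self]; ring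
    rw [hL, hR, zero_div]
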